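/- Fix 0 ≤ δ < 1/2 and even t ≥ 2, m ≥ 2. Suppose I^(1),...,I^(g) ⊆ {0,...,t-1} each have size t/2 and pairwise symmetric difference at least δt. Define X^(ℓ) = S(I^(ℓ)) and Y^(ℓ) = S({0,...,t-1} \ I^(ℓ)), where S(I) is the set of integers with m-ary digits (in [0,m-1]) supported on I. Then: (1) |X^(ℓ)| = |Y^(ℓ)| = m^{t/2}; (2) |X^(ℓ) + Y^(ℓ)| = m^t; (3) for ℓ ≠ h, |X^(ℓ) + Y^(h)| ≤ 2^{δt/2} · m^{(1−δ/2)t}. -/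

import Mathlib

open Pointwise

/-- `digitSet m I` is the set of natural numbers of the form `Σ_{i ∈ I} η_i · m^i`
with digits `0 ≤ η_i < m`. -/
def digitSet (m : ℕ) (I : Finset ℕ) : Finset ℕ :=
  (I.pi fun _ => Finset.range m).image fun η => ∑ i ∈ I.attach, η i.1 i.2 * m ^ (i.1 : ℕ)



lemma geom_sum_nat (m k : ℕ) (hm : 1 ≤ m) :
    ∑ i ∈ Finset.range k, (m - 1) * m ^ i = m ^ k - 1 := by
  induction k with
  | zero => simp
  | succ k ih =>
    rw [Finset.sum_range_succ, ih]
    have h1 : 1 ≤ m ^ k := Nat.one_le_pow _ _ hm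
    have h2 : m ^ (k + 1) = m ^ k * m := pow_succ m k
    have h3 : (m - 1) * m ^ k = m ^ k * m - m ^ k := by
      rw [Nat.sub_mul, one_mul, mul_comm]
    have h4 : m ^ k ≤ m ^ k * m := Nat.le_mul_of_pos_right _ hm
    omega

lemma sum_attach_eq (m : ℕ) (I : Finset ℕ) (η : (a : ℕ) → a ∈ I → ℕ) :
    ∑ i ∈ I.attach, η i.1 i.2 * m ^ (i.1 : ℕ)
      = ∑ i ∈ I, (if h : i ∈ I then η i h else 0) * m ^ i := by
  rw [← Finset.sum_attach I (fun i => (if h : i ∈ I then η i h else 0) * m ^ i)]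
  exact Finset.sum_congr rfl fun i _ => by rw [dif_pos i.2]

lemma mem_digitSet {m : ℕ} (hm : 0 < m) {I : Finset ℕ} {x : ℕ} :
    x ∈ digitSet m I ↔ ∃ η : ℕ → ℕ, (∀ i, η i < m) ∧ x = ∑ i ∈ I, η i * m ^ i := by
  constructor
  · intro hx
    obtain ⟨η, hη, rfl⟩ := Finset.mem_image.1 hx
    rw [Finset.mem_pi] at hη
    refine ⟨fun j => if h : j ∈ I then η j h else 0, fun i => ?_, ?_⟩
    · by_cases h : i ∈ I
      · simpa [h] using Finset.mem_range.1 (hη i h)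
      · simpa [h] using hm
    · rw [sum_attach_eq]
  · rintro ⟨η, hη, rfl⟩
    refine Finset.mem_image.2 ⟨fun i _ => η i, Finset.mem_pi.2 fun i _ => Finset.mem_range.2 (hη i), ?_⟩
    show ∑ i ∈ I.attach, η i.1 * m ^ (i.1:ℕ) = _
    exact Finset.sum_attach I fun i => η i * m ^ i

lemma digitSum_extract {m : ℕ} (hm : 0 < m) (η : ℕ → ℕ) (I : Finset ℕ)
    (hη : ∀ i ∈ I, η i < m) (k : ℕ) :
    (∑ i ∈ I, η i * m ^ i) / m ^ k % m = if k ∈ I then η k else 0 := by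
  classical
  set A := ∑ i ∈ I.filter (· < k), η i * m ^ i with hA
  set C := ∑ i ∈ I.filter (fun i => k < i), η i * m ^ (i - (k + 1)) with hC
  set d := if k ∈ I then η k else 0 with hd
  have hsplit : ∑ i ∈ I, η i * m ^ i = A + m ^ k * (d + m * C) := by
    have hU : I = (I.filter (· < k)) ∪ ((I.filter (· = k)) ∪ I.filter (fun i => k < i)) := by
      ext i
      simp only [Finset.mem_union, Finset.mem_filter]
      constructor
      · intro hi; rcases lt_trichotomy i k with h | h | h
        · exact Or.inl ⟨hi, h⟩
        · exact Or.inr (Or.inl ⟨hi, h⟩)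
        · exact Or.inr (Or.inr ⟨hi, h⟩)
      · rintro (⟨hi, _⟩ | ⟨hi, _⟩ | ⟨hi, _⟩) <;> exact hi
    have hd1 : Disjoint (I.filter (· < k)) ((I.filter (· = k)) ∪ I.filter (fun i => k < i)) := by
      simp only [Finset.disjoint_left, Finset.mem_union, Finset.mem_filter]
      rintro a ⟨_, h1⟩ (⟨_, h2⟩ | ⟨_, h2⟩) <;> omega
    have hd2 : Disjoint (I.filter (· = k)) (I.filter (fun i => k < i)) := by
      simp only [Finset.disjoint_left, Finset.mem_filter]
      rintro a ⟨_, h1⟩ ⟨_, h2⟩; omega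
    conv_lhs => rw [hU]
    rw [Finset.sum_union hd1, Finset.sum_union hd2]
    have hmid : ∑ i ∈ I.filter (· = k), η i * m ^ i = d * m ^ k := by
      rw [Finset.filter_eq' I k, hd]
      by_cases h : k ∈ I
      · rw [if_pos h, if_pos h, Finset.sum_singleton]
      · rw [if_neg h, if_neg h, Finset.sum_empty, zero_mul]
    have hhigh : ∑ i ∈ I.filter (fun i => k < i), η i * m ^ i = m ^ (k + 1) * C := by
      rw [hC, Finset.mul_sum]
      refine Finset.sum_congr rfl fun i hi => ?_
      have : k < i := (Finset.mem_filter.1 hi).2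
      rw [← mul_assoc, mul_comm (m ^ (k+1)), mul_assoc, ← pow_add]
      congr 2
      omega
    rw [hmid, hhigh]
    ring_nf
    rw [hA]
  have hAlt : A < m ^ k := by
    have h1 : A ≤ ∑ i ∈ I.filter (· < k), (m - 1) * m ^ i :=
      Finset.sum_le_sum fun i hi =>
        Nat.mul_le_mul_right _ (by have := hη i (Finset.mem_filter.1 hi).1; omega)
    have h2 : ∑ i ∈ I.filter (· < k), (m - 1) * m ^ i ≤ ∑ i ∈ Finset.range k, (m - 1) * m ^ i :=
      Finset.sum_le_sum_of_subset fun i hi =>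
        Finset.mem_range.2 (Finset.mem_filter.1 hi).2
    have h3 := geom_sum_nat m k hm
    have h4 : 1 ≤ m ^ k := Nat.one_le_pow _ _ hm
    omega
  have hdm : d < m := by
    rw [hd]; split
    · exact hη _ ‹_›
    · exact hm
  rw [hsplit, Nat.add_mul_div_left _ _ (pow_pos hm k), Nat.div_eq_of_lt hAlt,
    zero_add, Nat.add_mul_mod_self_left, Nat.mod_eq_of_lt hdm]

lemma card_digitSet {m : ℕ} (hm : 0 < m) (I : Finset ℕ) :
    (digitSet m I).card = m ^ I.card := by
  classical
  rw [digitSet, Finset.card_image_of_injOn, Finset.card_pi]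
  · simp [Finset.prod_const]
  · intro η hη η' hη' heq
    rw [Finset.mem_coe, Finset.mem_pi] at hη hη'
    simp only at heq
    rw [sum_attach_eq, sum_attach_eq] at heq
    funext i hi
    have hb : ∀ j ∈ I, (if h : j ∈ I then η j h else 0) < m := fun j hj => by
      rw [dif_pos hj]; exact Finset.mem_range.1 (hη j hj)
    have hb' : ∀ j ∈ I, (if h : j ∈ I then η' j h else 0) < m := fun j hj => by
      rw [dif_pos hj]; exact Finset.mem_range.1 (hη' j hj)
    have e1 := digitSum_extract hm _ I hb i
    have e2 := digitSum_extract hm _ I hb' i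
    rw [heq, e2] at e1
    simpa [hi] using e1.symm

lemma digitSet_add_of_disjoint {m : ℕ} (hm : 0 < m) {I J : Finset ℕ} (h : Disjoint I J) :
    digitSet m I + digitSet m J = digitSet m (I ∪ J) := by
  classical
  ext x
  simp only [Finset.mem_add, mem_digitSet hm]
  constructor
  · rintro ⟨y, ⟨η, hη, rfl⟩, z, ⟨ζ, hζ, rfl⟩, rfl⟩
    refine ⟨fun i => if i ∈ I then η i else ζ i, fun i => ?_, ?_⟩
    · by_cases hI : i ∈ I <;> simp [hI, hη i, hζ i]
    · rw [Finset.sum_union h]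
      congr 1
      · exact Finset.sum_congr rfl fun i hi => by simp [hi]
      · exact Finset.sum_congr rfl fun i hi => by simp [Finset.disjoint_right.1 h hi]
  · rintro ⟨θ, hθ, rfl⟩
    exact ⟨∑ i ∈ I, θ i * m ^ i, ⟨θ, hθ, rfl⟩, ∑ i ∈ J, θ i * m ^ i, ⟨θ, hθ, rfl⟩,
      (Finset.sum_union h).symm⟩

lemma card_digitSet_add_le {m : ℕ} (hm : 0 < m) (I J : Finset ℕ) :
    (digitSet m I + digitSet m J).card
      ≤ (2 * m - 1) ^ (I ∩ J).card * m ^ ((I \ J).card + (J \ I).card) := by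
  classical
  set U := I ∪ J with hU
  have hsub : digitSet m I + digitSet m J ⊆
      (U.pi fun i => Finset.range (if i ∈ I ∩ J then 2 * m - 1 else m)).image
        fun η => ∑ i ∈ U.attach, η i.1 i.2 * m ^ (i.1 : ℕ) := by
    intro x hx
    obtain ⟨y, hy, z, hz, rfl⟩ := Finset.mem_add.1 hx
    rw [mem_digitSet hm] at hy hz
    obtain ⟨η, hη, rfl⟩ := hy
    obtain ⟨ζ, hζ, rfl⟩ := hz
    set θ : ℕ → ℕ := fun i => (if i ∈ I then η i else 0) + (if i ∈ J then ζ i else 0) with hθ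
    refine Finset.mem_image.2 ⟨fun i _ => θ i, Finset.mem_pi.2 fun i hi => ?_, ?_⟩
    · rw [Finset.mem_range, hθ]
      have h1 := hη i
      have h2 := hζ i
      by_cases hI : i ∈ I <;> by_cases hJ : i ∈ J <;>
        simp only [Finset.mem_inter, hI, hJ, if_pos, if_neg, and_true, and_false,
          true_and, false_and, if_true, if_false] <;> omega
    · show ∑ i ∈ U.attach, θ i.1 * m ^ (i.1 : ℕ) = _
      rw [Finset.sum_attach U fun i => θ i * m ^ i]
      have : ∑ i ∈ U, θ i * m ^ i
          = (∑ i ∈ U, (if i ∈ I then η i else 0) * m ^ i)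
            + ∑ i ∈ U, (if i ∈ J then ζ i else 0) * m ^ i := by
        rw [← Finset.sum_add_distrib]
        exact Finset.sum_congr rfl fun i _ => by rw [hθ]; ring
      rw [this]
      congr 1
      · simp only [ite_mul, zero_mul]
        rw [Finset.sum_ite_mem, Finset.union_inter_cancel_left]
      · simp only [ite_mul, zero_mul]
        rw [Finset.sum_ite_mem, Finset.union_inter_cancel_right]
  calc (digitSet m I + digitSet m J).card
      ≤ _ := Finset.card_le_card hsub
    _ ≤ (U.pi fun i => Finset.range (if i ∈ I ∩ J then 2 * m - 1 else m)).card :=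
        Finset.card_image_le
    _ = ∏ i ∈ U, (if i ∈ I ∩ J then 2 * m - 1 else m) := by
        rw [Finset.card_pi]
        exact Finset.prod_congr rfl fun i _ => by split <;> simp [Finset.card_range]
    _ = (2 * m - 1) ^ (I ∩ J).card * m ^ ((I \ J).card + (J \ I).card) := by
        have h1 : U.filter (· ∈ I ∩ J) = I ∩ J := by
          ext i; simp only [Finset.mem_filter, Finset.mem_inter, hU, Finset.mem_union]; tauto
        have h2 : U.filter (fun i => i ∉ I ∩ J) = (I \ J) ∪ (J \ I) := by
          ext i
          simp only [Finset.mem_filter, Finset.mem_inter, hU, Finset.mem_union,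
            Finset.mem_sdiff, not_and]
          tauto
        have h3 : Disjoint (I \ J) (J \ I) := by
          rw [Finset.disjoint_left]
          intro a ha hb
          rw [Finset.mem_sdiff] at ha hb
          tauto
        rw [Finset.prod_ite, Finset.prod_const, Finset.prod_const, h1, h2,
          Finset.card_union_of_disjoint h3]

/-- Lovett's construction: with `I^(ℓ)` of size `t/2` and pairwise symmetric difference
at least `δt`, the sets `X^(ℓ) = S(I^(ℓ))` and `Y^(ℓ) = S(I^(ℓ)ᶜ)` satisfy
(1) `|X^(ℓ)| = |Y^(ℓ)| = m^{t/2}`, (2) `|X^(ℓ) + Y^(ℓ)| = m^t`, and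
(3) for `ℓ ≠ h`, `|X^(ℓ) + Y^(h)| ≤ 2^{δt/2} · m^{(1−δ/2)t}`. -/
theorem digit_code_sumsets (δ : ℝ) (hδ0 : 0 ≤ δ) (hδ : δ < 1 / 2)
    (m t : ℕ) (hm : 2 ≤ m) (ht : 2 ≤ t) (hte : Even t)
    (g : ℕ) (I : Fin g → Finset ℕ)
    (hsub : ∀ ℓ, I ℓ ⊆ Finset.range t)
    (hcard : ∀ ℓ, (I ℓ).card = t / 2)
    (hdist : ∀ ℓ h : Fin g, ℓ ≠ h → δ * t ≤ ((symmDiff (I ℓ) (I h)).card : ℝ)) :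
    (∀ ℓ, (digitSet m (I ℓ)).card = m ^ (t / 2) ∧
      (digitSet m (Finset.range t \ I ℓ)).card = m ^ (t / 2)) ∧
    (∀ ℓ, (digitSet m (I ℓ) + digitSet m (Finset.range t \ I ℓ)).card = m ^ t) ∧
    (∀ ℓ h : Fin g, ℓ ≠ h →
      ((digitSet m (I ℓ) + digitSet m (Finset.range t \ I h)).card : ℝ) ≤
        (2 : ℝ) ^ (δ * t / 2) * (m : ℝ) ^ ((1 - δ / 2) * t)) := by
  have hm0 : 0 < m := by omega
  obtain ⟨k, hk⟩ := hte
  have ht2 : t / 2 = k := by omega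
  have hcompl : ∀ ℓ, (Finset.range t \ I ℓ).card = t / 2 := fun ℓ => by
    rw [Finset.card_sdiff_of_subset (hsub ℓ), Finset.card_range, hcard ℓ]; omega
  refine ⟨fun ℓ => ⟨?_, ?_⟩, fun ℓ => ?_, fun ℓ h hne => ?_⟩
  · rw [card_digitSet hm0, hcard]
  · rw [card_digitSet hm0, hcompl]
  · rw [digitSet_add_of_disjoint hm0 Finset.disjoint_sdiff,
      Finset.union_sdiff_of_subset (hsub ℓ), card_digitSet hm0, Finset.card_range]
  · -- part (3)
    set A := I ℓ with hA
    set B := Finset.range t \ I h with hB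
    have hib : A ∩ B = I ℓ \ I h := by
      ext i
      simp only [hA, hB, Finset.mem_inter, Finset.mem_sdiff]
      constructor
      · rintro ⟨h1, _, h3⟩; exact ⟨h1, h3⟩
      · rintro ⟨h1, h3⟩; exact ⟨h1, hsub ℓ h1, h3⟩
    set a := (I ℓ \ I h).card with ha
    have e1 : (I ℓ \ I h).card + (I ℓ ∩ I h).card = t / 2 := by
      rw [Finset.card_sdiff_add_card_inter, hcard]
    have e2 : (I h \ I ℓ).card + (I h ∩ I ℓ).card = t / 2 := by
      rw [Finset.card_sdiff_add_card_inter, hcard]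
    have heq : (I h \ I ℓ).card = a := by
      rw [Finset.inter_comm] at e2; omega
    have hsymm : (symmDiff (I ℓ) (I h)).card = 2 * a := by
      rw [symmDiff_def, Finset.sup_eq_union,
        Finset.card_union_of_disjoint, heq]
      · omega
      · rw [Finset.disjoint_left]
        intro x hx hy
        rw [Finset.mem_sdiff] at hx hy
        tauto
    have ha2 : a ≤ t / 2 := by omega
    have hABcard : (A \ B).card + (B \ A).card = t - 2 * a := by
      have f1 : (A \ B).card + (A ∩ B).card = t / 2 := by
        rw [Finset.card_sdiff_add_card_inter, hcard]
      have f2 : (B \ A).card + (B ∩ A).card = t / 2 := by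
        rw [Finset.card_sdiff_add_card_inter, hcompl]
      rw [Finset.inter_comm] at f2
      rw [hib] at f1 f2
      omega
    have hnat : (digitSet m A + digitSet m B).card ≤ 2 ^ a * m ^ (t - a) := by
      calc (digitSet m A + digitSet m B).card
          ≤ (2 * m - 1) ^ (A ∩ B).card * m ^ ((A \ B).card + (B \ A).card) :=
            card_digitSet_add_le hm0 A B
        _ = (2 * m - 1) ^ a * m ^ (t - 2 * a) := by rw [hib, hABcard]
        _ ≤ (2 * m) ^ a * m ^ (t - 2 * a) :=
            Nat.mul_le_mul_right _ (Nat.pow_le_pow_left (by omega) a)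
        _ = 2 ^ a * (m ^ a * m ^ (t - 2 * a)) := by rw [mul_pow]; ring
        _ = 2 ^ a * m ^ (t - a) := by
            have hx : a + (t - 2 * a) = t - a := by omega
            rw [← pow_add, hx]
    have hcast : ((digitSet m A + digitSet m B).card : ℝ)
        ≤ (2 : ℝ) ^ (a : ℕ) * (m : ℝ) ^ (t - a : ℕ) := by exact_mod_cast hnat
    have hmpos : (0 : ℝ) < m := by positivity
    have hm2 : (2 : ℝ) ≤ (m : ℝ) := by exact_mod_cast hm
    set r : ℝ := δ * t / 2 with hr
    have hra : r ≤ (a : ℝ) := by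
      have hd := hdist ℓ h hne
      rw [hsymm] at hd
      push_cast at hd
      rw [hr]; linarith
    have hat : a ≤ t := by omega
    have key : ∀ x : ℝ, (2 : ℝ) ^ x * (m : ℝ) ^ ((t : ℝ) - x)
        = (2 / m) ^ x * (m : ℝ) ^ (t : ℝ) := fun x => by
      rw [Real.div_rpow (by norm_num) hmpos.le, Real.rpow_sub hmpos]
      field_simp
    have step1 : (2 : ℝ) ^ (a : ℕ) * (m : ℝ) ^ (t - a : ℕ)
        = (2 : ℝ) ^ (a : ℝ) * (m : ℝ) ^ ((t : ℝ) - (a : ℝ)) := by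
      rw [← Nat.cast_sub hat, Real.rpow_natCast, Real.rpow_natCast]
    have hdm1 : (2 : ℝ) / m ≤ 1 := (div_le_one hmpos).2 hm2
    have hdm0 : (0 : ℝ) < 2 / m := by positivity
    have step2 : (2 / (m : ℝ)) ^ (a : ℝ) ≤ (2 / (m : ℝ)) ^ r :=
      Real.rpow_le_rpow_of_exponent_ge hdm0 hdm1 hra
    have hfin : (2 : ℝ) ^ (a : ℝ) * (m : ℝ) ^ ((t : ℝ) - (a : ℝ))
        ≤ (2 : ℝ) ^ r * (m : ℝ) ^ ((t : ℝ) - r) := by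
      rw [key, key r]
      exact mul_le_mul_of_nonneg_right step2 (Real.rpow_nonneg hmpos.le _)
    have hexp : (1 - δ / 2) * (t : ℝ) = (t : ℝ) - r := by rw [hr]; ring
    rw [hexp]
    calc ((digitSet m A + digitSet m B).card : ℝ)
        ≤ (2 : ℝ) ^ (a : ℕ) * (m : ℝ) ^ (t - a : ℕ) := hcast
      _ = (2 : ℝ) ^ (a : ℝ) * (m : ℝ) ^ ((t : ℝ) - (a : ℝ)) := step1
      _ ≤ (2 : ℝ) ^ r * (m : ℝ) ^ ((t : ℝ) - r) := hfin
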